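/- In the root system of type $C_\ell$ with simple roots $\alpha_1,\ldots,\alpha_\ell$ (with $\alpha_\ell$ long), let $1 \le p \le \ell-1$, let $\Theta = \Sigma\setminus\{\alpha_p, \alpha_\ell\}$, and let $\delta_P = \sum_{\gamma\in\Pi^+\setminus\langle\Theta\rangle^+}\gamma$. Then $\langle \delta_P, h_{\alpha_p}^\vee\rangle = \ell$ and $\langle \delta_P, h_{\alpha_\ell}^\vee\rangle = \ell - p + 1$. -/

import Mathlib

open Finset
open scoped Classical

noncomputable section

/-- `i`-th standard basis vector of `ℚ^k`. -/
def E (k : ℕ) (i : Fin k) : Fin k → ℚ := fun j => if j = i then 1 else 0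

/-- The Euclidean inner product on `ℚ^k`. -/
def dot {k : ℕ} (v w : Fin k → ℚ) : ℚ := ∑ i, v i * w i

/-- The pairing `⟨β, h_γ^∨⟩ = 2(β,γ)/(γ,γ)` of `β` with the coroot of `γ`. -/
def pairing {k : ℕ} (β γ : Fin k → ℚ) : ℚ := 2 * dot β γ / dot γ γ

/-- The set `⟨Θ⟩⁺` of positive roots that are integral combinations of elements of `Θ`. -/
def spanPos {k : ℕ} (pos Θ : Finset (Fin k → ℚ)) : Finset (Fin k → ℚ) :=
  pos.filter fun γ => ∃ c : (Fin k → ℚ) → ℤ, γ = ∑ θ ∈ Θ, (c θ : ℚ) • θ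

/-- `δ_P`, the sum of the positive roots not lying in the integral span of `Θ`. -/
def deltaP {k : ℕ} (pos Θ : Finset (Fin k → ℚ)) : Fin k → ℚ :=
  ∑ γ ∈ pos \ spanPos pos Θ, γ

/-- Positive roots of type `C_ℓ`: `e_i ± e_j` (`i < j`) and `2e_i`. -/
def posC (ℓ : ℕ) : Finset (Fin ℓ → ℚ) :=
  (((univ : Finset (Fin ℓ × Fin ℓ)).filter fun p => p.1 < p.2).image
      fun p => E ℓ p.1 - E ℓ p.2) ∪
  (((univ : Finset (Fin ℓ × Fin ℓ)).filter fun p => p.1 < p.2).image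
      fun p => E ℓ p.1 + E ℓ p.2) ∪
  ((univ : Finset (Fin ℓ)).image fun i => (2 : ℚ) • E ℓ i)

/-- Simple roots of type `C_ℓ`: `α_{i+1} = e_i - e_{i+1}` for `i + 1 < ℓ`, and the
long simple root `α_ℓ = 2e_{ℓ-1}`. -/
def simpleC (ℓ : ℕ) (i : Fin ℓ) : Fin ℓ → ℚ :=
  if h : i.val + 1 < ℓ then E ℓ i - E ℓ ⟨i.val + 1, h⟩ else (2 : ℚ) • E ℓ i

variable {ℓ : ℕ}

lemma sumE (s : Finset (Fin ℓ)) (i : Fin ℓ) :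
    (∑ k ∈ s, E ℓ i k) = if i ∈ s then 1 else 0 := by
  simp [E, Finset.sum_ite_eq']

lemma sum_coord_sub (s : Finset (Fin ℓ)) (i j : Fin ℓ) :
    (∑ k ∈ s, (E ℓ i - E ℓ j) k)
      = (if i ∈ s then (1:ℚ) else 0) - (if j ∈ s then 1 else 0) := by
  simp only [Pi.sub_apply, Finset.sum_sub_distrib, sumE]

lemma sum_coord_add (s : Finset (Fin ℓ)) (i j : Fin ℓ) :
    (∑ k ∈ s, (E ℓ i + E ℓ j) k)
      = (if i ∈ s then (1:ℚ) else 0) + (if j ∈ s then 1 else 0) := by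
  simp only [Pi.add_apply, Finset.sum_add_distrib, sumE]

lemma sum_coord_smul (s : Finset (Fin ℓ)) (i : Fin ℓ) :
    (∑ k ∈ s, ((2:ℚ) • E ℓ i) k)
      = 2 * (if i ∈ s then (1:ℚ) else 0) := by
  simp only [Pi.smul_apply, smul_eq_mul, ← Finset.mul_sum, sumE]

lemma diff_inj {i j i' j' : Fin ℓ} (hij : i < j) (hij' : i' < j')
    (h : E ℓ i - E ℓ j = E ℓ i' - E ℓ j') : i = i' ∧ j = j' := by
  rw [Fin.lt_def] at hij hij'
  have h1 := congrFun h i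
  simp only [Pi.sub_apply, E, Fin.ext_iff] at h1
  have hii' : i = i' := by
    split_ifs at h1 <;> first | exact Fin.ext ‹_› | omega | norm_num at h1
  subst hii'
  have h2 : E ℓ j = E ℓ j' := by
    have := sub_right_inj.mp h
    exact this
  have h3 := congrFun h2 j
  simp only [E, Fin.ext_iff] at h3
  refine ⟨rfl, ?_⟩
  split_ifs at h3 <;> first | exact Fin.ext ‹_› | omega | norm_num at h3

lemma add_inj {i j i' j' : Fin ℓ} (hij : i < j) (hij' : i' < j')
    (h : E ℓ i + E ℓ j = E ℓ i' + E ℓ j') : i = i' ∧ j = j' := by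
  rw [Fin.lt_def] at hij hij'
  have h1 := congrFun h i
  have h2 := congrFun h i'
  simp only [Pi.add_apply, E, Fin.ext_iff, eq_self_iff_true, if_true] at h1 h2
  have hii' : i = i' := by
    by_contra hne
    have hne' : ¬ (i:ℕ) = (i':ℕ) := fun hv => hne (Fin.ext hv)
    have hne'' : ¬ (i':ℕ) = (i:ℕ) := fun hv => hne (Fin.ext hv.symm)
    split_ifs at h1 h2 <;> first | omega | (norm_num at h1; done) | (norm_num at h2; done) | norm_num at h1 h2
  subst hii'
  have h3 : E ℓ j = E ℓ j' := add_left_cancel h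
  have h4 := congrFun h3 j
  simp only [E, Fin.ext_iff, eq_self_iff_true, if_true] at h4
  refine ⟨rfl, ?_⟩
  split_ifs at h4 <;> first | exact Fin.ext ‹_› | omega | norm_num at h4

lemma diff_ne_add {i j i' j' : Fin ℓ} (hij : i < j) :
    E ℓ i - E ℓ j ≠ E ℓ i' + E ℓ j' := by
  intro h
  rw [Fin.lt_def] at hij
  have h1 := congrFun h j
  simp only [Pi.sub_apply, Pi.add_apply, E, Fin.ext_iff, eq_self_iff_true, if_true] at h1
  split_ifs at h1 <;> first | omega | norm_num at h1

lemma diff_ne_smul {i j k : Fin ℓ} (hij : i < j) :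
    E ℓ i - E ℓ j ≠ (2:ℚ) • E ℓ k := by
  intro h
  rw [Fin.lt_def] at hij
  have h1 := congrFun h j
  simp only [Pi.sub_apply, Pi.smul_apply, smul_eq_mul, E, Fin.ext_iff,
    eq_self_iff_true, if_true] at h1
  split_ifs at h1 <;> first | omega | norm_num at h1

lemma add_ne_smul {i j k : Fin ℓ} (hij : i < j) :
    E ℓ i + E ℓ j ≠ (2:ℚ) • E ℓ k := by
  intro h
  rw [Fin.lt_def] at hij
  have h1 := congrFun h i
  simp only [Pi.add_apply, Pi.smul_apply, smul_eq_mul, E, Fin.ext_iff,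
    eq_self_iff_true, if_true] at h1
  split_ifs at h1 <;> first | omega | norm_num at h1

lemma smul_inj {i k : Fin ℓ} (h : (2:ℚ) • E ℓ i = (2:ℚ) • E ℓ k) : i = k := by
  have h1 := congrFun h i
  simp only [Pi.smul_apply, smul_eq_mul, E, Fin.ext_iff, eq_self_iff_true, if_true] at h1
  split_ifs at h1 <;> first | exact Fin.ext ‹_› | omega | norm_num at h1

lemma simpleC_injective : Function.Injective (simpleC ℓ) := by
  intro a b h
  unfold simpleC at h
  by_cases ha : a.val + 1 < ℓ <;> by_cases hb : b.val + 1 < ℓ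
  · rw [dif_pos ha, dif_pos hb] at h
    have h1 := congrFun h a
    simp only [Pi.sub_apply, E, Fin.ext_iff, eq_self_iff_true, if_true] at h1
    apply Fin.ext
    split_ifs at h1 <;> first | omega | norm_num at h1
  · rw [dif_pos ha, dif_neg hb] at h
    exact absurd h (diff_ne_smul (by simp [Fin.lt_def]))
  · rw [dif_neg ha, dif_pos hb] at h
    exact absurd h.symm (diff_ne_smul (by simp [Fin.lt_def]))
  · have := a.isLt; have := b.isLt
    apply Fin.ext; omega

def ThetaC (ℓ p : ℕ) : Finset (Fin ℓ → ℚ) :=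
  ((univ : Finset (Fin ℓ)).filter fun i => i.val + 1 ≠ p ∧ i.val + 1 ≠ ℓ).image (simpleC ℓ)

def Ee (ℓ m : ℕ) : Fin ℓ → ℚ := fun j => if j.val = m then 1 else 0

lemma E_eq_Ee (i : Fin ℓ) : E ℓ i = Ee ℓ i.val := by
  funext j; simp [E, Ee, Fin.ext_iff]

lemma telescope (a : ℕ) : ∀ b : ℕ, a ≤ b →
    ∑ k ∈ Finset.Ico a b, (Ee ℓ k - Ee ℓ (k+1)) = Ee ℓ a - Ee ℓ b := by
  intro b
  induction b with
  | zero => intro hab; have : a = 0 := by omega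
            subst this; simp
  | succ n ih =>
    intro hab
    rcases Nat.lt_or_ge a (n+1) with h | h
    · rw [Finset.sum_Ico_succ_top (by omega), ih (by omega)]; abel
    · have : a = n+1 := by omega
      subst this; simp

lemma sum_fin_filter_Ico (a b : ℕ) (hb : b ≤ ℓ) (f : ℕ → Fin ℓ → ℚ) :
    ∑ k ∈ univ.filter (fun k : Fin ℓ => a ≤ k.val ∧ k.val < b), f k.val
      = ∑ k ∈ Finset.Ico a b, f k := by
  refine Finset.sum_bij' (fun k _ => k.val) (fun k hk => (⟨k, by
      simp only [Finset.mem_Ico] at hk; omega⟩ : Fin ℓ)) ?_ ?_ ?_ ?_ ?_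
  · intro k hk; simp only [mem_filter, mem_univ, true_and] at hk
    simp [Finset.mem_Ico]; omega
  · intro k hk; simp only [Finset.mem_Ico] at hk
    simp [mem_filter]; omega
  · intro k hk; exact Fin.ext rfl
  · intro k hk; rfl
  · intro k hk; rfl

lemma theta_sums (p : ℕ) (θ : Fin ℓ → ℚ) (hθ : θ ∈ ThetaC ℓ p) :
    (∑ k ∈ univ.filter (fun k : Fin ℓ => k.val < p), θ k) = 0 ∧
    (∑ k ∈ univ.filter (fun k : Fin ℓ => p ≤ k.val), θ k) = 0 := by
  rw [ThetaC] at hθ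
  simp only [mem_image, mem_filter, mem_univ, true_and] at hθ
  obtain ⟨i, ⟨hip, hil⟩, rfl⟩ := hθ
  have hi1 : i.val + 1 < ℓ := by have := i.isLt; omega
  rw [simpleC, dif_pos hi1]
  constructor
  · rw [sum_coord_sub]
    simp only [mem_filter, mem_univ, true_and, Fin.val_mk]
    split_ifs <;> first | (exfalso; omega) | norm_num
  · rw [sum_coord_sub]
    simp only [mem_filter, mem_univ, true_and, Fin.val_mk]
    split_ifs <;> first | (exfalso; omega) | norm_num

lemma span_sums_zero (Θ : Finset (Fin ℓ → ℚ)) (c : (Fin ℓ → ℚ) → ℤ)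
    (s : Finset (Fin ℓ)) (hz : ∀ θ ∈ Θ, ∑ k ∈ s, θ k = 0) :
    ∑ k ∈ s, (∑ θ ∈ Θ, (c θ : ℚ) • θ) k = 0 := by
  calc ∑ k ∈ s, (∑ θ ∈ Θ, (c θ:ℚ) • θ) k
      = ∑ k ∈ s, ∑ θ ∈ Θ, (c θ:ℚ) * θ k := by
        simp [Finset.sum_apply, smul_eq_mul]
    _ = ∑ θ ∈ Θ, ∑ k ∈ s, (c θ:ℚ) * θ k := Finset.sum_comm
    _ = ∑ θ ∈ Θ, (c θ:ℚ) * ∑ k ∈ s, θ k := by simp [Finset.mul_sum]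
    _ = 0 := by refine Finset.sum_eq_zero fun θ hθ => ?_; rw [hz θ hθ, mul_zero]

lemma diff_mem_span (p : ℕ) (i j : Fin ℓ) (hij : i < j)
    (hblock : j.val < p ∨ p ≤ i.val) :
    ∃ c : (Fin ℓ → ℚ) → ℤ, E ℓ i - E ℓ j = ∑ θ ∈ ThetaC ℓ p, (c θ : ℚ) • θ := by
  have hjl := j.isLt
  rw [Fin.lt_def] at hij
  set T : Finset (Fin ℓ → ℚ) :=
    (univ.filter (fun k : Fin ℓ => i.val ≤ k.val ∧ k.val < j.val)).image (simpleC ℓ) with hT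
  have hTsub : T ⊆ ThetaC ℓ p := by
    intro v hv
    rw [hT] at hv; rw [ThetaC]
    simp only [mem_image, mem_filter, mem_univ, true_and] at hv ⊢
    obtain ⟨k, ⟨hk1, hk2⟩, rfl⟩ := hv
    exact ⟨k, ⟨by omega, by omega⟩, rfl⟩
  refine ⟨fun v => if v ∈ T then 1 else 0, ?_⟩
  have step1 : ∑ θ ∈ ThetaC ℓ p, (((if θ ∈ T then (1:ℤ) else 0) : ℤ) : ℚ) • θ
      = ∑ θ ∈ T, θ := by
    have hc : ∀ θ ∈ ThetaC ℓ p,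
        (((if θ ∈ T then (1:ℤ) else 0) : ℤ) : ℚ) • θ = (if θ ∈ T then θ else 0) := by
      intro θ _; split_ifs <;> simp
    rw [Finset.sum_congr rfl hc, Finset.sum_ite_mem, Finset.inter_eq_right.mpr hTsub]
  rw [step1, hT, Finset.sum_image (fun a _ b _ hab => simpleC_injective hab)]
  have hcong : ∀ k ∈ univ.filter (fun k : Fin ℓ => i.val ≤ k.val ∧ k.val < j.val),
      simpleC ℓ k = (fun m => Ee ℓ m - Ee ℓ (m+1)) k.val := by
    intro k hk
    simp only [mem_filter, mem_univ, true_and] at hk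
    have hk1 : k.val + 1 < ℓ := by omega
    rw [simpleC, dif_pos hk1]
    simp only [E_eq_Ee]
  rw [Finset.sum_congr rfl hcong,
    sum_fin_filter_Ico i.val j.val (by omega) (fun m => Ee ℓ m - Ee ℓ (m+1)),
    telescope i.val j.val (by omega)]
  simp only [E_eq_Ee]

lemma sum_univ_partition (γ : Fin ℓ → ℚ) (p : ℕ) :
    (∑ k ∈ univ.filter (fun k : Fin ℓ => k.val < p), γ k)
      + (∑ k ∈ univ.filter (fun k : Fin ℓ => p ≤ k.val), γ k) = ∑ k, γ k := by
  have : (univ.filter fun k : Fin ℓ => p ≤ k.val)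
      = univ.filter (fun k : Fin ℓ => ¬ k.val < p) := by
    apply Finset.filter_congr; intro k _; simp [not_lt]
  rw [this]
  exact Finset.sum_filter_add_sum_filter_not univ _ γ

lemma span_eq (p : ℕ) :
    spanPos (posC ℓ) (ThetaC ℓ p) =
      ((univ : Finset (Fin ℓ × Fin ℓ)).filter
          fun q => q.1 < q.2 ∧ (q.2.val < p ∨ p ≤ q.1.val)).image
        (fun q => E ℓ q.1 - E ℓ q.2) := by
  ext γ
  simp only [spanPos, mem_filter, mem_image, mem_univ, true_and]
  constructor
  · rintro ⟨hpos, c, hc⟩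
    have hA : (∑ k ∈ univ.filter (fun k : Fin ℓ => k.val < p), γ k) = 0 := by
      rw [hc]; exact span_sums_zero _ c _ (fun θ hθ => (theta_sums p θ hθ).1)
    have hB : (∑ k ∈ univ.filter (fun k : Fin ℓ => p ≤ k.val), γ k) = 0 := by
      rw [hc]; exact span_sums_zero _ c _ (fun θ hθ => (theta_sums p θ hθ).2)
    have htot : (∑ k, γ k) = 0 := by
      rw [← sum_univ_partition γ p, hA, hB]; ring
    rw [posC, mem_union, mem_union] at hpos
    rcases hpos with (h | h) | h
    · simp only [mem_image, mem_filter, mem_univ, true_and] at h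
      obtain ⟨q, hq, rfl⟩ := h
      refine ⟨q, ⟨hq, ?_⟩, rfl⟩
      rw [sum_coord_sub] at hA
      simp only [mem_filter, mem_univ, true_and] at hA
      rw [Fin.lt_def] at hq
      split_ifs at hA <;> first | omega | norm_num at hA
    · exfalso
      simp only [mem_image, mem_filter, mem_univ, true_and] at h
      obtain ⟨q, hq, rfl⟩ := h
      rw [sum_coord_add univ] at htot
      simp only [mem_univ, if_true] at htot
      norm_num at htot
    · exfalso
      simp only [mem_image, mem_univ, true_and] at h
      obtain ⟨i, rfl⟩ := h
      rw [sum_coord_smul univ] at htot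
      simp only [mem_univ, if_true] at htot
      norm_num at htot
  · rintro ⟨q, ⟨hq, hcond⟩, rfl⟩
    constructor
    · rw [posC, mem_union, mem_union]
      left; left
      simp only [mem_image, mem_filter, mem_univ, true_and]
      exact ⟨q, hq, rfl⟩
    · exact diff_mem_span p q.1 q.2 hq hcond

lemma sum_pair_fst (C : Fin ℓ × Fin ℓ → Prop) [DecidablePred C] (m : Fin ℓ) :
    ∑ q ∈ univ.filter C, (if m = q.1 then (1:ℚ) else 0)
      = #(univ.filter fun j : Fin ℓ => C (m, j)) := by
  rw [Finset.sum_filter, Fintype.sum_prod_type]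
  have h1 : ∀ i : Fin ℓ, (∑ j, if C (i,j) then (if m = i then (1:ℚ) else 0) else 0)
      = if i = m then (∑ j, if C (i,j) then (1:ℚ) else 0) else 0 := by
    intro i
    by_cases him : i = m
    · subst him; simp
    · have hmi : ¬ m = i := fun h => him h.symm
      simp [him, hmi]
  rw [Finset.sum_congr rfl (fun i _ => h1 i), Fintype.sum_ite_eq' m, Finset.sum_boole]

lemma sum_pair_snd (C : Fin ℓ × Fin ℓ → Prop) [DecidablePred C] (m : Fin ℓ) :
    ∑ q ∈ univ.filter C, (if m = q.2 then (1:ℚ) else 0)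
      = #(univ.filter fun i : Fin ℓ => C (i, m)) := by
  rw [Finset.sum_filter, Fintype.sum_prod_type, Finset.sum_comm]
  have h1 : ∀ j : Fin ℓ, (∑ i, if C (i,j) then (if m = j then (1:ℚ) else 0) else 0)
      = if j = m then (∑ i, if C (i,j) then (1:ℚ) else 0) else 0 := by
    intro j
    by_cases hjm : j = m
    · subst hjm; simp
    · have hmj : ¬ m = j := fun h => hjm h.symm
      simp [hjm, hmj]
  rw [Finset.sum_congr rfl (fun j _ => h1 j), Fintype.sum_ite_eq' m, Finset.sum_boole]

lemma sum_image_diff_coord (s : Finset (Fin ℓ × Fin ℓ)) (hs : ∀ q ∈ s, q.1 < q.2) (m : Fin ℓ) :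
    ∑ γ ∈ s.image (fun q => E ℓ q.1 - E ℓ q.2), γ m
      = ∑ q ∈ s, ((if m = q.1 then (1:ℚ) else 0) - (if m = q.2 then 1 else 0)) := by
  rw [Finset.sum_image (fun a ha b hb hab =>
    Prod.ext (diff_inj (hs a ha) (hs b hb) hab).1 (diff_inj (hs a ha) (hs b hb) hab).2)]
  exact Finset.sum_congr rfl fun q hq => by simp [E]

lemma sum_image_add_coord (s : Finset (Fin ℓ × Fin ℓ)) (hs : ∀ q ∈ s, q.1 < q.2) (m : Fin ℓ) :
    ∑ γ ∈ s.image (fun q => E ℓ q.1 + E ℓ q.2), γ m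
      = ∑ q ∈ s, ((if m = q.1 then (1:ℚ) else 0) + (if m = q.2 then 1 else 0)) := by
  rw [Finset.sum_image (fun a ha b hb hab =>
    Prod.ext (add_inj (hs a ha) (hs b hb) hab).1 (add_inj (hs a ha) (hs b hb) hab).2)]
  exact Finset.sum_congr rfl fun q hq => by simp [E]

lemma sum_image_smul_coord (m : Fin ℓ) :
    ∑ γ ∈ ((univ : Finset (Fin ℓ)).image fun i => (2:ℚ) • E ℓ i), γ m = 2 := by
  rw [Finset.sum_image (fun a _ b _ hab => smul_inj hab)]
  have : ∀ i : Fin ℓ, ((2:ℚ) • E ℓ i) m = 2 * (if m = i then (1:ℚ) else 0) := by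
    intro i; simp [E]
  rw [Finset.sum_congr rfl (fun i _ => this i), ← Finset.mul_sum, Fintype.sum_ite_eq m]
  norm_num

lemma sum_posC_coord (m : Fin ℓ) :
    ∑ γ ∈ posC ℓ, γ m = 2*((ℓ:ℚ) - (m.val:ℚ)) := by
  have hm := m.isLt
  set U1 := (((univ : Finset (Fin ℓ × Fin ℓ)).filter fun q => q.1 < q.2).image
      fun q => E ℓ q.1 - E ℓ q.2) with hU1
  set U2 := (((univ : Finset (Fin ℓ × Fin ℓ)).filter fun q => q.1 < q.2).image
      fun q => E ℓ q.1 + E ℓ q.2) with hU2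
  set U3 := ((univ : Finset (Fin ℓ)).image fun i => (2 : ℚ) • E ℓ i) with hU3
  have hpairs : ∀ q ∈ (univ : Finset (Fin ℓ × Fin ℓ)).filter fun q => q.1 < q.2,
      q.1 < q.2 := fun q hq => (mem_filter.mp hq).2
  have d12 : Disjoint U1 U2 := by
    rw [Finset.disjoint_left]
    intro γ h1 h2
    rw [hU1, mem_image] at h1; rw [hU2, mem_image] at h2
    obtain ⟨a, ha, rfl⟩ := h1
    obtain ⟨b, hb, hbe⟩ := h2
    exact diff_ne_add (hpairs a ha) hbe.symm
  have d3 : Disjoint (U1 ∪ U2) U3 := by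
    rw [Finset.disjoint_left]
    intro γ h1 h2
    rw [hU3, mem_image] at h2
    obtain ⟨k, _, hke⟩ := h2
    rw [mem_union] at h1
    rcases h1 with h1 | h1
    · rw [hU1, mem_image] at h1
      obtain ⟨a, ha, rfl⟩ := h1
      exact diff_ne_smul (hpairs a ha) hke.symm
    · rw [hU2, mem_image] at h1
      obtain ⟨a, ha, rfl⟩ := h1
      exact add_ne_smul (hpairs a ha) hke.symm
  have hposC : posC ℓ = (U1 ∪ U2) ∪ U3 := rfl
  rw [hposC, Finset.sum_union d3, Finset.sum_union d12]
  rw [sum_image_diff_coord _ hpairs m, sum_image_add_coord _ hpairs m,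
    sum_image_smul_coord m]
  rw [Finset.sum_sub_distrib, Finset.sum_add_distrib,
    sum_pair_fst _ m, sum_pair_snd _ m]
  have egt : (univ.filter fun j : Fin ℓ => (m, j).1 < (m, j).2) = Ioi m := by
    ext x; simp
  have elt : (univ.filter fun i : Fin ℓ => (i, m).1 < (i, m).2) = Iio m := by
    ext x; simp
  rw [egt, elt, Fin.card_Ioi, Fin.card_Iio]
  rw [Nat.cast_sub (by omega), Nat.cast_sub (by omega)]
  push_cast
  ring

lemma sum_span_coord (p : ℕ) (hp : 1 ≤ p) (hpl : p + 1 ≤ ℓ) (m : Fin ℓ) :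
    ∑ γ ∈ spanPos (posC ℓ) (ThetaC ℓ p), γ m
      = if m.val < p then (p:ℚ) - 1 - 2*(m.val:ℚ) else (ℓ:ℚ) - 1 + p - 2*(m.val:ℚ) := by
  have hm := m.isLt
  rw [span_eq p]
  rw [sum_image_diff_coord _ (fun q hq => (mem_filter.mp hq).2.1) m]
  rw [Finset.sum_sub_distrib, sum_pair_fst _ m, sum_pair_snd _ m]
  by_cases hmp : m.val < p
  · have e1 : (univ.filter fun j : Fin ℓ =>
        (m, j).1 < (m, j).2 ∧ ((m, j).2.val < p ∨ p ≤ (m, j).1.val))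
        = Ioo m ⟨p, by omega⟩ := by
      ext x; simp only [mem_filter, mem_univ, true_and, Finset.mem_Ioo, Fin.lt_def, Fin.val_mk]
      omega
    have e2 : (univ.filter fun i : Fin ℓ =>
        (i, m).1 < (i, m).2 ∧ ((i, m).2.val < p ∨ p ≤ (i, m).1.val))
        = Iio m := by
      ext x; simp only [mem_filter, mem_univ, true_and, Finset.mem_Iio, Fin.lt_def]
      omega
    rw [e1, e2, Fin.card_Ioo, Fin.card_Iio, if_pos hmp]
    simp only [Fin.val_mk]
    rw [Nat.cast_sub (by omega), Nat.cast_sub (by omega)]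
    push_cast
    ring
  · have e1 : (univ.filter fun j : Fin ℓ =>
        (m, j).1 < (m, j).2 ∧ ((m, j).2.val < p ∨ p ≤ (m, j).1.val))
        = Ioi m := by
      ext x; simp only [mem_filter, mem_univ, true_and, Finset.mem_Ioi, Fin.lt_def]
      omega
    have e2 : (univ.filter fun i : Fin ℓ =>
        (i, m).1 < (i, m).2 ∧ ((i, m).2.val < p ∨ p ≤ (i, m).1.val))
        = Ico ⟨p, by omega⟩ m := by
      ext x; simp only [mem_filter, mem_univ, true_and, Finset.mem_Ico, Fin.lt_def,
        Fin.le_def, Fin.val_mk]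
      omega
    rw [e1, e2, Fin.card_Ioi, Fin.card_Ico, if_neg hmp]
    simp only [Fin.val_mk]
    rw [Nat.cast_sub (by omega), Nat.cast_sub (by omega), Nat.cast_sub (by omega)]
    push_cast
    ring

lemma delta_coord (p : ℕ) (hp : 1 ≤ p) (hpl : p + 1 ≤ ℓ) (m : Fin ℓ) :
    deltaP (posC ℓ) (ThetaC ℓ p) m
      = if m.val < p then 2*(ℓ:ℚ) - (p:ℚ) + 1 else (ℓ:ℚ) - (p:ℚ) + 1 := by
  have hsub : spanPos (posC ℓ) (ThetaC ℓ p) ⊆ posC ℓ := Finset.filter_subset _ _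
  rw [deltaP, Finset.sum_apply, Finset.sum_sdiff_eq_sub hsub,
    sum_posC_coord, sum_span_coord p hp hpl]
  split_ifs <;> ring

lemma dot_diff (v : Fin ℓ → ℚ) (a b : Fin ℓ) :
    dot v (E ℓ a - E ℓ b) = v a - v b := by
  rw [dot]
  have : ∀ i : Fin ℓ, v i * (E ℓ a - E ℓ b) i
      = (if i = a then v i else 0) - (if i = b then v i else 0) := by
    intro i; simp only [Pi.sub_apply, E]
    split_ifs <;> ring
  rw [Finset.sum_congr rfl (fun i _ => this i), Finset.sum_sub_distrib,
    Fintype.sum_ite_eq' a, Fintype.sum_ite_eq' b]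

lemma dot_two (v : Fin ℓ → ℚ) (a : Fin ℓ) :
    dot v ((2:ℚ) • E ℓ a) = 2 * v a := by
  rw [dot]
  have : ∀ i : Fin ℓ, v i * ((2:ℚ) • E ℓ a) i
      = if i = a then 2 * v i else 0 := by
    intro i; simp only [Pi.smul_apply, smul_eq_mul, E]
    split_ifs <;> ring
  rw [Finset.sum_congr rfl (fun i _ => this i), Fintype.sum_ite_eq' a]

/-- Koszul numbers for `Sp(ℓ)/U(p)×U(ℓ-p)`: in type `C_ℓ` with `Θ = Σ \ {α_p, α_ℓ}`,
one has `⟨δ_P, h_{α_p}^∨⟩ = ℓ` and `⟨δ_P, h_{α_ℓ}^∨⟩ = ℓ - p + 1`. -/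
theorem stmt7 (ℓ p : ℕ) (hp : 1 ≤ p) (hpl : p ≤ ℓ - 1) (hl : 2 ≤ ℓ)
    (Θ : Finset (Fin ℓ → ℚ))
    (hΘ : Θ = ((univ : Finset (Fin ℓ)).filter fun i =>
        i.val + 1 ≠ p ∧ i.val + 1 ≠ ℓ).image (simpleC ℓ)) :
    pairing (deltaP (posC ℓ) Θ) (simpleC ℓ ⟨p - 1, by omega⟩) = (ℓ : ℚ) ∧
    pairing (deltaP (posC ℓ) Θ) (simpleC ℓ ⟨ℓ - 1, by omega⟩) = (ℓ : ℚ) - p + 1 := by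
  have hΘ' : Θ = ThetaC ℓ p := hΘ
  subst hΘ'
  have hpl' : p + 1 ≤ ℓ := by omega
  constructor
  · have hsim : simpleC ℓ ⟨p - 1, by omega⟩
        = E ℓ ⟨p - 1, by omega⟩ - E ℓ ⟨p - 1 + 1, by omega⟩ := by
      rw [simpleC, dif_pos (show p - 1 + 1 < ℓ by omega)]
    rw [pairing, hsim, dot_diff, dot_diff]
    have hab : ((⟨p - 1, by omega⟩ : Fin ℓ) : Fin ℓ) ≠ ⟨p - 1 + 1, by omega⟩ := by
      simp only [ne_eq, Fin.ext_iff, Fin.val_mk]; omega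
    have hE : (E ℓ ⟨p - 1, by omega⟩ - E ℓ ⟨p - 1 + 1, by omega⟩) ⟨p - 1, by omega⟩
        - (E ℓ ⟨p - 1, by omega⟩ - E ℓ ⟨p - 1 + 1, by omega⟩) ⟨p - 1 + 1, by omega⟩ = 2 := by
      simp only [Pi.sub_apply, E, Fin.ext_iff, Fin.val_mk]
      have h1 : ¬ (p - 1 = p - 1 + 1) := by omega
      have h2 : ¬ (p - 1 + 1 = p - 1) := by omega
      simp only [if_true, if_neg h1, if_neg h2]
      norm_num
    rw [hE, delta_coord p hp hpl', delta_coord p hp hpl']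
    rw [if_pos (show ((⟨p - 1, by omega⟩ : Fin ℓ)).val < p by
      simp only [Fin.val_mk]; omega)]
    rw [if_neg (show ¬ ((⟨p - 1 + 1, by omega⟩ : Fin ℓ)).val < p by
      simp only [Fin.val_mk]; omega)]
    ring
  · have hsim : simpleC ℓ ⟨ℓ - 1, by omega⟩ = (2:ℚ) • E ℓ ⟨ℓ - 1, by omega⟩ := by
      rw [simpleC, dif_neg (show ¬ (ℓ - 1 + 1 < ℓ) by omega)]
    rw [pairing, hsim, dot_two, dot_two]
    have hE : ((2:ℚ) • E ℓ ⟨ℓ - 1, by omega⟩) ⟨ℓ - 1, by omega⟩ = 2 := by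
      simp [E]
    rw [hE, delta_coord p hp hpl']
    rw [if_neg (show ¬ ((⟨ℓ - 1, by omega⟩ : Fin ℓ)).val < p by
      simp only [Fin.val_mk]; omega)]
    ring
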